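/- arXiv:1810.02304 — 2 statements merged into one kernel-verified Lean document; each statement's English description precedes it below -/
import Mathlib

section
/- Let T be a 4-Steiner root of a graph G, let K be a maximal clique of G, and let X be a clique-intersection with X ⊊ K. If the subtree T⟨X⟩ has diameter 3 (is a bistar), then the center of T⟨K⟩ is a strict subset of the center of T⟨X⟩; in particular, diam(T⟨K⟩) = 4 and the unique central node of T⟨K⟩ is one of the two central nodes of T⟨X⟩. -/
noncomputable def setEcc {V : Type*} (T : SimpleGraph V) (S : Set V) (v : V) : ℕ :=
  sSup {d | ∃ u ∈ S, T.dist v u = d}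

noncomputable def setDiam {V : Type*} (T : SimpleGraph V) (S : Set V) : ℕ :=
  sSup {d | ∃ u ∈ S, ∃ w ∈ S, T.dist u w = d}

noncomputable def setRad {V : Type*} (T : SimpleGraph V) (S : Set V) : ℕ :=
  sInf {e | ∃ v ∈ S, setEcc T S v = e}

noncomputable def setCenter {V : Type*} (T : SimpleGraph V) (S : Set V) : Set V :=
  {v ∈ S | setEcc T S v = setRad T S}

/-- `T` is a `k`-Steiner root of `G` (via the injection `f` of the vertices of
`G` into the nodes of `T`): `T` is a tree and two distinct vertices of `G` are
adjacent iff their images are at distance at most `k` in `T`. -/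
def IsSteinerRoot (k : ℕ) {α β : Type*} (G : SimpleGraph α) (T : SimpleGraph β)
    (f : α → β) : Prop :=
  Function.Injective f ∧ T.IsTree ∧
    ∀ u v : α, u ≠ v → (G.Adj u v ↔ T.dist (f u) (f v) ≤ k)

/-- The vertex set of the smallest subtree of the tree `T` containing `X`:
all nodes lying on a path between two elements of `X`. -/
def span {β : Type*} (T : SimpleGraph β) (X : Set β) : Set β :=
  {w | ∃ u ∈ X, ∃ v ∈ X, ∃ p : T.Walk u v, p.IsPath ∧ w ∈ p.support}

open SimpleGraph

section TreeLemmas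

variable {β : Type*} {T : SimpleGraph β}

lemma tree_path_length (hT : T.IsTree) {u v : β} {p : T.Walk u v} (hp : p.IsPath) :
    p.length = T.dist u v := by
  obtain ⟨q, hq, hql⟩ := hT.isConnected.exists_path_of_dist u v
  obtain ⟨r, -, hun⟩ := hT.existsUnique_path u v
  rw [hun p hp, ← hun q hq, hql]

lemma tree_between (hT : T.IsTree) {u v w : β} {p : T.Walk u v} (hp : p.IsPath)
    (hw : w ∈ p.support) : T.dist u w + T.dist w v = T.dist u v := by
  classical
  have h1 : (p.takeUntil w hw).length = T.dist u w := tree_path_length hT (hp.takeUntil hw)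
  have h2 : (p.dropUntil w hw).length = T.dist w v := tree_path_length hT (hp.dropUntil hw)
  have h3 : (p.takeUntil w hw).length + (p.dropUntil w hw).length = p.length := by
    rw [← Walk.length_append, Walk.take_spec]
  rw [h1, h2, tree_path_length hT hp] at h3
  exact h3

/-- between two vertices of a path there is a path whose support lies in the path. -/
lemma tree_subpath {u v w x : β} (p : T.Walk u v) (hp : p.IsPath)
    (hw : w ∈ p.support) (hx : x ∈ p.support) :
    ∃ r : T.Walk w x, r.IsPath ∧ ∀ y ∈ r.support, y ∈ p.support := by
  classical
  have hx' : x ∈ ((p.takeUntil w hw).append (p.dropUntil w hw)).support := by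
    rw [Walk.take_spec]; exact hx
  rcases (Walk.mem_support_append_iff _ _).1 hx' with h | h
  · refine ⟨((p.takeUntil w hw).dropUntil x h).reverse, ((hp.takeUntil hw).dropUntil h).reverse, ?_⟩
    intro y hy
    rw [Walk.support_reverse, List.mem_reverse] at hy
    exact p.support_takeUntil_subset hw (Walk.support_dropUntil_subset _ h hy)
  · refine ⟨(p.dropUntil w hw).takeUntil x h, (hp.dropUntil hw).takeUntil h, ?_⟩
    intro y hy
    exact p.support_dropUntil_subset hw (Walk.support_takeUntil_subset _ h hy)

/-- Gate (projection) of a vertex onto a path in a tree. -/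
lemma tree_gate (hT : T.IsTree) {u v : β} (p : T.Walk u v) (hp : p.IsPath) (z : β) :
    ∃ g ∈ p.support, ∀ w ∈ p.support, T.dist z w = T.dist z g + T.dist g w := by
  classical
  have hne : ((fun y => T.dist z y) '' {y | y ∈ p.support}).Nonempty :=
    ⟨_, ⟨u, p.start_mem_support, rfl⟩⟩
  obtain ⟨g, hg, hgd⟩ := Nat.sInf_mem hne
  refine ⟨g, hg, fun w hw => ?_⟩
  have hmin : ∀ y ∈ p.support, T.dist z g ≤ T.dist z y := fun y hy => by
    simpa only [hgd] using Nat.sInf_le (⟨y, hy, rfl⟩ : _ ∈ (fun y => T.dist z y) '' {y | y ∈ p.support})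
  obtain ⟨r, hr, hrsub⟩ := tree_subpath p hp hg hw
  obtain ⟨q, hq, hql⟩ := hT.isConnected.exists_path_of_dist z g
  have hpath : (q.append r).IsPath := by
    rw [Walk.isPath_def, Walk.support_append, List.nodup_append]
    refine ⟨hq.support_nodup, hr.support_nodup.tail, ?_⟩
    intro y hyq y' hyt hyy'
    subst hyy'
    have hyr : y ∈ r.support := List.mem_of_mem_tail hyt
    have hyg : y ≠ g := by
      intro h; subst h
      have := hr.support_nodup
      rw [r.support_eq_cons] at this
      exact (List.nodup_cons.1 this).1 hyt
    have h1 := tree_between hT hq hyq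
    have h2 := hmin y (hrsub y hyr)
    have h3 : 0 < T.dist y g := hT.isConnected.pos_dist_of_ne hyg
    omega
  have hlen := tree_path_length hT hpath
  rw [Walk.length_append, hql, tree_path_length hT hr] at hlen
  exact hlen.symm


section SpanLemmas

variable {β : Type*} {T : SimpleGraph β}

lemma mem_span_of_mem {S : Set β} {u : β} (h : u ∈ S) : u ∈ span T S :=
  ⟨u, h, u, h, Walk.nil, by simp⟩

lemma span_mono {S S' : Set β} (h : S ⊆ S') : span T S ⊆ span T S' :=
  fun w ⟨u, hu, v, hv, p, hp, hw⟩ => ⟨u, h hu, v, h hv, p, hp, hw⟩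

/-- Position lemma: for `g, a` on a path `u→v` in a tree,
`dist g a ≤ dist g u` or `dist g a ≤ dist g v`. -/
lemma dcomm (T : SimpleGraph β) (a b : β) : T.dist a b = T.dist b a := SimpleGraph.dist_comm

lemma tree_dist_on_path (hT : T.IsTree) {u v a g : β} (p : T.Walk u v) (hp : p.IsPath)
    (ha : a ∈ p.support) (hg : g ∈ p.support) :
    T.dist g a ≤ T.dist g u ∨ T.dist g a ≤ T.dist g v := by
  classical
  have ha' : a ∈ ((p.takeUntil g hg).append (p.dropUntil g hg)).support := by
    rw [Walk.take_spec]; exact ha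
  rcases (Walk.mem_support_append_iff _ _).1 ha' with h | h
  · left
    have := tree_between hT (hp.takeUntil hg) h
    rw [dcomm T u a, dcomm T u g] at this
    rw [dcomm T g a]
    omega
  · right
    have := tree_between hT (hp.dropUntil hg) h
    omega

/-- For `a` on a path `u→v` in a tree and any `z`,
`dist z a ≤ max (dist z u) (dist z v)`. -/
lemma tree_dist_le_of_mem_path (hT : T.IsTree) {u v a : β} (p : T.Walk u v) (hp : p.IsPath)
    (ha : a ∈ p.support) (z : β) :
    T.dist z a ≤ T.dist z u ∨ T.dist z a ≤ T.dist z v := by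
  obtain ⟨g, hg, hgate⟩ := tree_gate hT p hp z
  have e1 := hgate u p.start_mem_support
  have e2 := hgate v p.end_mem_support
  have e3 := hgate a ha
  rcases tree_dist_on_path hT p hp ha hg with h | h
  · left; omega
  · right; omega

lemma span_dist_le' (hT : T.IsTree) {S : Set β} {x y : β}
    (hx : x ∈ span T S) (hy : y ∈ span T S) :
    ∃ a ∈ S, ∃ b ∈ S, T.dist x y ≤ T.dist a b := by
  obtain ⟨u2, hu2, v2, hv2, p2, hp2, hy⟩ := hy
  obtain ⟨u1, hu1, v1, hv1, p1, hp1, hx⟩ := hx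
  rcases tree_dist_le_of_mem_path hT p2 hp2 hy x with h | h
  · rcases tree_dist_le_of_mem_path hT p1 hp1 hx u2 with h' | h'
    · exact ⟨u2, hu2, u1, hu1, by rw [dcomm T x u2] at h; omega⟩
    · exact ⟨u2, hu2, v1, hv1, by rw [dcomm T x u2] at h; omega⟩
  · rcases tree_dist_le_of_mem_path hT p1 hp1 hx v2 with h' | h'
    · exact ⟨v2, hv2, u1, hu1, by rw [dcomm T x v2] at h; omega⟩
    · exact ⟨v2, hv2, v1, hv1, by rw [dcomm T x v2] at h; omega⟩

lemma span_dist_le (hT : T.IsTree) {S : Set β} {D : ℕ}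
    (hS : ∀ a ∈ S, ∀ b ∈ S, T.dist a b ≤ D) {x y : β}
    (hx : x ∈ span T S) (hy : y ∈ span T S) : T.dist x y ≤ D := by
  obtain ⟨a, ha, b, hb, h⟩ := span_dist_le' hT hx hy
  exact h.trans (hS a ha b hb)

end SpanLemmas

section SetMetric

variable {β : Type*} [Fintype β] (T : SimpleGraph β) (S : Set β)

lemma diamSet_finite : {d | ∃ u ∈ S, ∃ w ∈ S, T.dist u w = d}.Finite := by
  apply Set.Finite.subset (Set.finite_range (fun p : β × β => T.dist p.1 p.2))
  rintro d ⟨u, -, w, -, rfl⟩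
  exact ⟨(u, w), rfl⟩

lemma eccSet_finite (v : β) : {d | ∃ u ∈ S, T.dist v u = d}.Finite := by
  apply Set.Finite.subset (Set.finite_range (fun u : β => T.dist v u))
  rintro d ⟨u, -, rfl⟩
  exact ⟨u, rfl⟩

variable {T S}

lemma le_setDiam {u w : β} (hu : u ∈ S) (hw : w ∈ S) : T.dist u w ≤ setDiam T S :=
  le_csSup (diamSet_finite T S).bddAbove ⟨u, hu, w, hw, rfl⟩

lemma setDiam_le {D : ℕ} (hne : S.Nonempty) (h : ∀ u ∈ S, ∀ w ∈ S, T.dist u w ≤ D) :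
    setDiam T S ≤ D := by
  have hnem : {d | ∃ u ∈ S, ∃ w ∈ S, T.dist u w = d}.Nonempty :=
    ⟨0, hne.choose, hne.choose_spec, hne.choose, hne.choose_spec, T.dist_self⟩
  apply csSup_le hnem
  rintro d ⟨u, hu, w, hw, rfl⟩
  exact h u hu w hw

lemma exists_setDiam {d : ℕ} (h : setDiam T S = d) (hd : d ≠ 0) :
    ∃ u ∈ S, ∃ w ∈ S, T.dist u w = d := by
  have hne : {d | ∃ u ∈ S, ∃ w ∈ S, T.dist u w = d}.Nonempty := by
    by_contra hc
    rw [Set.not_nonempty_iff_eq_empty] at hc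
    rw [setDiam, hc] at h
    simp at h
    exact hd h.symm
  have := Nat.sSup_mem hne (diamSet_finite T S).bddAbove
  rw [setDiam] at h
  rwa [h] at this

lemma le_setEcc {v u : β} (hu : u ∈ S) : T.dist v u ≤ setEcc T S v :=
  le_csSup (eccSet_finite T S v).bddAbove ⟨u, hu, rfl⟩

lemma setEcc_le {v : β} {D : ℕ} (hne : S.Nonempty) (h : ∀ u ∈ S, T.dist v u ≤ D) :
    setEcc T S v ≤ D := by
  have hnem : {d | ∃ u ∈ S, T.dist v u = d}.Nonempty :=
    ⟨T.dist v hne.choose, hne.choose, hne.choose_spec, rfl⟩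
  apply csSup_le hnem
  rintro d ⟨u, hu, rfl⟩
  exact h u hu

lemma setRad_le {v : β} (hv : v ∈ S) : setRad T S ≤ setEcc T S v :=
  Nat.sInf_le ⟨v, hv, rfl⟩

lemma le_setRad {d : ℕ} (hne : S.Nonempty) (h : ∀ v ∈ S, d ≤ setEcc T S v) :
    d ≤ setRad T S := by
  have hnem : {e | ∃ v ∈ S, setEcc T S v = e}.Nonempty :=
    ⟨setEcc T S hne.choose, hne.choose, hne.choose_spec, rfl⟩
  apply le_csInf hnem
  rintro e ⟨v, hv, rfl⟩
  exact h v hv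

end SetMetric
end TreeLemmas
section WalkDestruct

variable {β : Type*} {T : SimpleGraph β}

lemma walk3 (hT : T.IsTree) {u v : β} (p : T.Walk u v) (hp : p.IsPath) (hlen : p.length = 3) :
    ∃ a b : β, p.support = [u, a, b, v] ∧ T.dist u a = 1 ∧ T.dist a b = 1 ∧ T.dist b v = 1 ∧
      T.dist u b = 2 ∧ T.dist a v = 2 ∧ T.dist u v = 3 := by
  have hduv : T.dist u v = 3 := by
    have := tree_path_length hT hp
    omega
  cases p with
  | nil => simp at hlen
  | cons h₁ q =>
    cases q with
    | nil => simp at hlen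
    | cons h₂ q₂ =>
      cases q₂ with
      | nil => simp at hlen
      | cons h₃ q₃ =>
        cases q₃ with
        | cons h₄ q₄ => simp [SimpleGraph.Walk.length_cons] at hlen
        | nil =>
          rename_i a b
          refine ⟨a, b, by simp, ?_, ?_, ?_, ?_, ?_, hduv⟩
          · exact SimpleGraph.dist_eq_one_iff_adj.2 h₁
          · exact SimpleGraph.dist_eq_one_iff_adj.2 h₂
          · exact SimpleGraph.dist_eq_one_iff_adj.2 h₃
          · have hb : b ∈ (SimpleGraph.Walk.cons h₁ (SimpleGraph.Walk.cons h₂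
              (SimpleGraph.Walk.cons h₃ SimpleGraph.Walk.nil))).support := by simp
            have := tree_between hT hp hb
            have h3 : T.dist b v = 1 := SimpleGraph.dist_eq_one_iff_adj.2 h₃
            omega
          · have ha : a ∈ (SimpleGraph.Walk.cons h₁ (SimpleGraph.Walk.cons h₂
              (SimpleGraph.Walk.cons h₃ SimpleGraph.Walk.nil))).support := by simp
            have := tree_between hT hp ha
            have h1 : T.dist u a = 1 := SimpleGraph.dist_eq_one_iff_adj.2 h₁
            omega

lemma walk4 (hT : T.IsTree) {u v : β} (p : T.Walk u v) (hp : p.IsPath) (hlen : p.length = 4) :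
    ∃ a m b : β, p.support = [u, a, m, b, v] ∧
      T.dist u a = 1 ∧ T.dist a m = 1 ∧ T.dist m b = 1 ∧ T.dist b v = 1 ∧
      T.dist u m = 2 ∧ T.dist m v = 2 ∧ T.dist u b = 3 ∧ T.dist a v = 3 ∧
      T.dist u v = 4 := by
  have hduv : T.dist u v = 4 := by
    have := tree_path_length hT hp
    omega
  cases p with
  | nil => simp at hlen
  | cons h₁ q =>
    cases q with
    | nil => simp at hlen
    | cons h₂ q₂ =>
      cases q₂ with
      | nil => simp at hlen
      | cons h₃ q₃ =>
        cases q₃ with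
        | nil => simp at hlen
        | cons h₄ q₄ =>
          cases q₄ with
          | cons h₅ q₅ => simp [SimpleGraph.Walk.length_cons] at hlen
          | nil =>
            rename_i a m b
            have h1 : T.dist u a = 1 := SimpleGraph.dist_eq_one_iff_adj.2 h₁
            have h2 : T.dist a m = 1 := SimpleGraph.dist_eq_one_iff_adj.2 h₂
            have h3 : T.dist m b = 1 := SimpleGraph.dist_eq_one_iff_adj.2 h₃
            have h4 : T.dist b v = 1 := SimpleGraph.dist_eq_one_iff_adj.2 h₄
            have hm : m ∈ (SimpleGraph.Walk.cons h₁ (SimpleGraph.Walk.cons h₂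
              (SimpleGraph.Walk.cons h₃ (SimpleGraph.Walk.cons h₄ SimpleGraph.Walk.nil)))).support := by simp
            have ha : a ∈ (SimpleGraph.Walk.cons h₁ (SimpleGraph.Walk.cons h₂
              (SimpleGraph.Walk.cons h₃ (SimpleGraph.Walk.cons h₄ SimpleGraph.Walk.nil)))).support := by simp
            have hb : b ∈ (SimpleGraph.Walk.cons h₁ (SimpleGraph.Walk.cons h₂
              (SimpleGraph.Walk.cons h₃ (SimpleGraph.Walk.cons h₄ SimpleGraph.Walk.nil)))).support := by simp
            have hm' := tree_between hT hp hm
            have ha' := tree_between hT hp ha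
            have hb' := tree_between hT hp hb
            have hum : T.dist u m ≤ 2 := le_trans (hT.isConnected.dist_triangle (v := a)) (by omega)
            have hmv : T.dist m v ≤ 2 := le_trans (hT.isConnected.dist_triangle (v := b)) (by omega)
            exact ⟨a, m, b, by simp, h1, h2, h3, h4, by omega, by omega, by omega, by omega, hduv⟩

end WalkDestruct

def IsMaxClique {α : Type*} (G : SimpleGraph α) (K : Set α) : Prop :=
  G.IsClique K ∧ ∀ K', G.IsClique K' → K ⊆ K' → K' = K

/-- `X` is the intersection of a nonempty family of maximal cliques of `G`. -/
def IsCliqueIntersection {α : Type*} (G : SimpleGraph α) (X : Set α) : Prop :=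
  ∃ 𝒦 : Set (Set α), 𝒦.Nonempty ∧ (∀ K ∈ 𝒦, IsMaxClique G K) ∧ X = ⋂₀ 𝒦

/-- If `T` is a `4`-Steiner root of `G`, `X ⊊ K` is a clique-intersection
strictly contained in a maximal clique `K`, and `T⟨X⟩` is a bistar
(diameter 3), then `C(T⟨K⟩) ⊊ C(T⟨X⟩)`; in particular `diam(T⟨K⟩) = 4` and
the center of `T⟨K⟩` is a single node. -/
theorem stmt13 {α β : Type*} [Fintype α] [Fintype β]
    (G : SimpleGraph α) (hG : G.Connected) (T : SimpleGraph β) (f : α → β)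
    (hroot : IsSteinerRoot 4 G T f) (K X : Set α)
    (hK : IsMaxClique G K) (hX : IsCliqueIntersection G X) (hsub : X ⊂ K)
    (hd : setDiam T (span T (f '' X)) = 3) :
    setCenter T (span T (f '' K)) ⊂ setCenter T (span T (f '' X)) ∧
    setDiam T (span T (f '' K)) = 4 ∧
    ∃ c, setCenter T (span T (f '' K)) = {c} := by
  obtain ⟨finj, hT, hadj⟩ := hroot
  have hXK : X ⊆ K := hsub.subset
  have hABsub : span T (f '' X) ⊆ span T (f '' K) := span_mono (Set.image_mono hXK)
  -- a diametral pair of the bistar with endpoints in f '' X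
  have hbound3 : ∀ a ∈ span T (f '' X), ∀ b ∈ span T (f '' X), T.dist a b ≤ 3 :=
    fun a ha b hb => hd ▸ le_setDiam ha hb
  obtain ⟨a0, ha0, b0, hb0, hab0⟩ := exists_setDiam hd (by norm_num)
  obtain ⟨y1, hy1S, y2, hy2S, h3le⟩ := span_dist_le' hT ha0 hb0
  have hy1A : y1 ∈ span T (f '' X) := mem_span_of_mem hy1S
  have hy2A : y2 ∈ span T (f '' X) := mem_span_of_mem hy2S
  have hdy12 : T.dist y1 y2 = 3 := le_antisymm (hbound3 y1 hy1A y2 hy2A) (by omega)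
  obtain ⟨P, hP, hPlen⟩ := hT.isConnected.exists_path_of_dist y1 y2
  rw [hdy12] at hPlen
  obtain ⟨c1, c2, hPsupp, dy1c1, dc1c2, dc2y2, dy1c2, dc1y2, -⟩ := walk3 hT P hP hPlen
  have hPsubA : ∀ w ∈ P.support, w ∈ span T (f '' X) :=
    fun w hw => ⟨y1, hy1S, y2, hy2S, P, hP, hw⟩
  -- commuted distance facts
  have dc1y1 : T.dist c1 y1 = 1 := by rw [dcomm]; exact dy1c1
  have dc2c1 : T.dist c2 c1 = 1 := by rw [dcomm]; exact dc1c2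
  have dy2c2 : T.dist y2 c2 = 1 := by rw [dcomm]; exact dc2y2
  have dc2y1 : T.dist c2 y1 = 2 := by rw [dcomm]; exact dy1c2
  have dy2c1 : T.dist y2 c1 = 2 := by rw [dcomm]; exact dc1y2
  have dy2y1 : T.dist y2 y1 = 3 := by rw [dcomm]; exact hdy12
  have sy1 : T.dist y1 y1 = 0 := SimpleGraph.dist_self
  have sy2 : T.dist y2 y2 = 0 := SimpleGraph.dist_self
  have sc1 : T.dist c1 c1 = 0 := SimpleGraph.dist_self
  have sc2 : T.dist c2 c2 = 0 := SimpleGraph.dist_self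
  -- the three "gate analysis" steps on the bistar path
  have stepA : ∀ z, T.dist z y1 ≤ 3 → T.dist z y2 ≤ 3 →
      T.dist z c1 ≤ 2 ∧ T.dist z c2 ≤ 2 := by
    intro z h1 h2
    obtain ⟨g, hg, hgate⟩ := tree_gate hT P hP z
    have e1 := hgate y1 (by rw [hPsupp]; simp)
    have e2 := hgate y2 (by rw [hPsupp]; simp)
    have ec1 := hgate c1 (by rw [hPsupp]; simp)
    have ec2 := hgate c2 (by rw [hPsupp]; simp)
    rw [hPsupp] at hg; simp only [List.mem_cons, List.mem_singleton,
      List.not_mem_nil, or_false] at hg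
    rcases hg with rfl | rfl | rfl | rfl <;> omega
  have stepA4 : ∀ z, T.dist z y1 ≤ 4 → T.dist z y2 ≤ 4 →
      T.dist z c1 ≤ 2 ∨ T.dist z c2 ≤ 2 := by
    intro z h1 h2
    obtain ⟨g, hg, hgate⟩ := tree_gate hT P hP z
    have e1 := hgate y1 (by rw [hPsupp]; simp)
    have e2 := hgate y2 (by rw [hPsupp]; simp)
    have ec1 := hgate c1 (by rw [hPsupp]; simp)
    have ec2 := hgate c2 (by rw [hPsupp]; simp)
    rw [hPsupp] at hg; simp only [List.mem_cons, List.mem_singleton,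
      List.not_mem_nil, or_false] at hg
    rcases hg with rfl | rfl | rfl | rfl
    · left; omega
    · left; omega
    · right; omega
    · right; omega
  have stepAC : ∀ z, T.dist z y1 ≤ 2 → T.dist z y2 ≤ 2 → z = c1 ∨ z = c2 := by
    intro z h1 h2
    obtain ⟨g, hg, hgate⟩ := tree_gate hT P hP z
    have e1 := hgate y1 (by rw [hPsupp]; simp)
    have e2 := hgate y2 (by rw [hPsupp]; simp)
    have ec1 := hgate c1 (by rw [hPsupp]; simp)
    have ec2 := hgate c2 (by rw [hPsupp]; simp)
    rw [hPsupp] at hg; simp only [List.mem_cons, List.mem_singleton,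
      List.not_mem_nil, or_false] at hg
    rcases hg with rfl | rfl | rfl | rfl
    · exfalso; omega
    · left; exact (hT.isConnected.dist_eq_zero_iff).mp (by omega)
    · right; exact (hT.isConnected.dist_eq_zero_iff).mp (by omega)
    · exfalso; omega
  -- combinatorial part: find u ∉ K adjacent to all of X, and w ∈ K non-adjacent to u
  obtain ⟨v, hvK, hvX⟩ := Set.exists_of_ssubset hsub
  obtain ⟨𝒦, h𝒦ne, h𝒦max, hXint⟩ := hX
  have hvint : ∃ K2 ∈ 𝒦, v ∉ K2 := by
    by_contra hc
    push_neg at hc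
    exact hvX (hXint ▸ Set.mem_sInter.mpr hc)
  obtain ⟨K2, hK2mem, hvK2⟩ := hvint
  have hK2max := h𝒦max K2 hK2mem
  have hXsubK2 : X ⊆ K2 := hXint ▸ Set.sInter_subset_of_mem hK2mem
  have hexu : ∃ u ∈ K2, u ∉ K := by
    by_contra hc
    push_neg at hc
    have := hK2max.2 K hK.1 hc
    exact hvK2 (this ▸ hvK)
  obtain ⟨u, huK2, huK⟩ := hexu
  have hnotcl : ¬ G.IsClique (insert u K) := by
    intro hcl
    have := hK.2 _ hcl (Set.subset_insert _ _)
    exact huK (this ▸ Set.mem_insert u K)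
  have hexw : ∃ w ∈ K, w ≠ u ∧ ¬ G.Adj u w := by
    rw [SimpleGraph.isClique_iff, Set.Pairwise] at hnotcl
    push_neg at hnotcl
    obtain ⟨a, ha, b, hb, hne, hnadj⟩ := hnotcl
    rcases Set.mem_insert_iff.1 ha with rfl | haK
    · rcases Set.mem_insert_iff.1 hb with rfl | hbK
      · exact absurd rfl hne
      · exact ⟨b, hbK, fun h => hne h.symm, hnadj⟩
    · rcases Set.mem_insert_iff.1 hb with rfl | hbK
      · exact ⟨a, haK, hne, fun h => hnadj (h.symm)⟩
      · exact absurd (hK.1 haK hbK hne) hnadj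
  obtain ⟨w, hwK, hwu, hnadj⟩ := hexw
  have h5 : 5 ≤ T.dist (f u) (f w) := by
    by_contra hc
    exact hnadj ((hadj u w (fun h => hwu h.symm)).2 (by omega))
  have hu_x : ∀ x ∈ X, T.dist (f u) (f x) ≤ 4 := by
    intro x hx
    have hne : u ≠ x := fun h => huK (h ▸ hXK hx)
    exact (hadj u x hne).1 (hK2max.1 huK2 (hXsubK2 hx) hne)
  obtain ⟨x1, hx1X, hy1⟩ := hy1S
  obtain ⟨x2, hx2X, hy2⟩ := hy2S
  have huy1 : T.dist (f u) y1 ≤ 4 := hy1 ▸ hu_x x1 hx1X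
  have huy2 : T.dist (f u) y2 ≤ 4 := hy2 ▸ hu_x x2 hx2X
  -- the span of K has pairwise distances ≤ 4
  have hK4 : ∀ a ∈ f '' K, ∀ b ∈ f '' K, T.dist a b ≤ 4 := by
    rintro _ ⟨a, ha, rfl⟩ _ ⟨b, hb, rfl⟩
    rcases eq_or_ne a b with rfl | hne
    · simp [SimpleGraph.dist_self]
    · exact (hadj a b hne).1 (hK.1 ha hb hne)
  have hB4 : ∀ x ∈ span T (f '' K), ∀ y ∈ span T (f '' K), T.dist x y ≤ 4 :=
    fun x hx y hy => span_dist_le hT hK4 hx hy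
  have hBne : (span T (f '' K)).Nonempty := ⟨y1, hABsub hy1A⟩
  have hAne : (span T (f '' X)).Nonempty := ⟨y1, hy1A⟩
  -- diameter of span K is 4
  have hdB_le : setDiam T (span T (f '' K)) ≤ 4 := setDiam_le hBne hB4
  have hdB_ge : 3 ≤ setDiam T (span T (f '' K)) :=
    hdy12 ▸ le_setDiam (hABsub hy1A) (hABsub hy2A)
  have hfwB : f w ∈ span T (f '' K) := mem_span_of_mem ⟨w, hwK, rfl⟩
  have hdB : setDiam T (span T (f '' K)) = 4 := by
    by_contra hne4
    have hb3 : ∀ a ∈ span T (f '' K), ∀ b ∈ span T (f '' K), T.dist a b ≤ 3 := by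
      have h3 : setDiam T (span T (f '' K)) = 3 := by omega
      exact fun a ha b hb => h3 ▸ le_setDiam ha hb
    obtain ⟨hwc1, hwc2⟩ := stepA (f w) (hb3 (f w) hfwB y1 (hABsub hy1A))
      (hb3 (f w) hfwB y2 (hABsub hy2A))
    rcases stepA4 (f u) huy1 huy2 with h | h
    · have tri : T.dist (f u) (f w) ≤ T.dist (f u) c1 + T.dist c1 (f w) :=
        hT.isConnected.dist_triangle
      have : T.dist c1 (f w) = T.dist (f w) c1 := dcomm T c1 (f w)
      omega
    · have tri : T.dist (f u) (f w) ≤ T.dist (f u) c2 + T.dist c2 (f w) :=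
        hT.isConnected.dist_triangle
      have : T.dist c2 (f w) = T.dist (f w) c2 := dcomm T c2 (f w)
      omega
  -- a diametral path of span K and its midpoint m
  obtain ⟨a4, ha4, b4, hb4, hdab⟩ := exists_setDiam hdB (by norm_num)
  obtain ⟨k1, hk1, k2, hk2, h4le⟩ := span_dist_le' hT ha4 hb4
  have hk1B : k1 ∈ span T (f '' K) := mem_span_of_mem hk1
  have hk2B : k2 ∈ span T (f '' K) := mem_span_of_mem hk2
  have hk12 : T.dist k1 k2 = 4 := le_antisymm (hK4 k1 hk1 k2 hk2) (by omega)
  obtain ⟨Q, hQ, hQlen⟩ := hT.isConnected.exists_path_of_dist k1 k2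
  rw [hk12] at hQlen
  obtain ⟨q1, m, q2, hQsupp, dk1q1, dq1m, dmq2, dq2k2, dk1m, dmk2, dk1q2, dq1k2, -⟩ :=
    walk4 hT Q hQ hQlen
  have hQsubB : ∀ z ∈ Q.support, z ∈ span T (f '' K) :=
    fun z hz => ⟨k1, hk1, k2, hk2, Q, hQ, hz⟩
  have dq1k1 : T.dist q1 k1 = 1 := by rw [dcomm]; exact dk1q1
  have dmq1 : T.dist m q1 = 1 := by rw [dcomm]; exact dq1m
  have dq2m : T.dist q2 m = 1 := by rw [dcomm]; exact dmq2
  have dk2q2 : T.dist k2 q2 = 1 := by rw [dcomm]; exact dq2k2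
  have dmk1 : T.dist m k1 = 2 := by rw [dcomm]; exact dk1m
  have dk2m : T.dist k2 m = 2 := by rw [dcomm]; exact dmk2
  have dq2k1 : T.dist q2 k1 = 3 := by rw [dcomm]; exact dk1q2
  have dk2q1 : T.dist k2 q1 = 3 := by rw [dcomm]; exact dq1k2
  have dk2k1 : T.dist k2 k1 = 4 := by rw [dcomm]; exact hk12
  have sk1 : T.dist k1 k1 = 0 := SimpleGraph.dist_self
  have sk2 : T.dist k2 k2 = 0 := SimpleGraph.dist_self
  have sq1 : T.dist q1 q1 = 0 := SimpleGraph.dist_self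
  have sq2 : T.dist q2 q2 = 0 := SimpleGraph.dist_self
  have sm : T.dist m m = 0 := SimpleGraph.dist_self
  -- every vertex of span K is within distance 2 of m
  have hm_all : ∀ z ∈ span T (f '' K), T.dist z m ≤ 2 := by
    intro z hz
    have hz1 : T.dist z k1 ≤ 4 := hB4 z hz k1 hk1B
    have hz2 : T.dist z k2 ≤ 4 := hB4 z hz k2 hk2B
    obtain ⟨g, hg, hgate⟩ := tree_gate hT Q hQ z
    have e1 := hgate k1 (by rw [hQsupp]; simp)
    have e2 := hgate k2 (by rw [hQsupp]; simp)
    have em := hgate m (by rw [hQsupp]; simp)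
    rw [hQsupp] at hg; simp only [List.mem_cons, List.mem_singleton,
      List.not_mem_nil, or_false] at hg
    rcases hg with rfl | rfl | rfl | rfl | rfl <;> omega
  have hmB : m ∈ span T (f '' K) := hQsubB m (by rw [hQsupp]; simp)
  have heccm : setEcc T (span T (f '' K)) m = 2 := by
    refine le_antisymm (setEcc_le hBne fun z hz => ?_) ?_
    · rw [dcomm]; exact hm_all z hz
    · exact dmk1 ▸ le_setEcc hk1B
  have hradB : setRad T (span T (f '' K)) = 2 := by
    refine le_antisymm (heccm ▸ setRad_le hmB) (le_setRad hBne fun z hz => ?_)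
    have t1 : T.dist z k1 ≤ setEcc T (span T (f '' K)) z := le_setEcc hk1B
    have t2 : T.dist z k2 ≤ setEcc T (span T (f '' K)) z := le_setEcc hk2B
    have tri : T.dist k1 k2 ≤ T.dist k1 z + T.dist z k2 := hT.isConnected.dist_triangle
    have hc : T.dist k1 z = T.dist z k1 := dcomm T k1 z
    omega
  -- the center of span K is exactly {m}
  have hcB : setCenter T (span T (f '' K)) = {m} := by
    ext z
    simp only [Set.mem_singleton_iff]
    constructor
    · rintro ⟨hzB, hze⟩
      rw [hradB] at hze
      have hz1 : T.dist z k1 ≤ 2 := hze ▸ le_setEcc hk1B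
      have hz2 : T.dist z k2 ≤ 2 := hze ▸ le_setEcc hk2B
      obtain ⟨g, hg, hgate⟩ := tree_gate hT Q hQ z
      have e1 := hgate k1 (by rw [hQsupp]; simp)
      have e2 := hgate k2 (by rw [hQsupp]; simp)
      have em := hgate m (by rw [hQsupp]; simp)
      rw [hQsupp] at hg; simp only [List.mem_cons, List.mem_singleton,
        List.not_mem_nil, or_false] at hg
      rcases hg with rfl | rfl | rfl | rfl | rfl
      · exfalso; omega
      · exfalso; omega
      · exact (hT.isConnected.dist_eq_zero_iff).mp (by omega)
      · exfalso; omega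
      · exfalso; omega
    · rintro rfl
      exact ⟨hmB, heccm.trans hradB.symm⟩
  -- the center of span X contains both c1 and c2
  have hc1A : c1 ∈ span T (f '' X) := hPsubA c1 (by rw [hPsupp]; simp)
  have hc2A : c2 ∈ span T (f '' X) := hPsubA c2 (by rw [hPsupp]; simp)
  have heccc1 : setEcc T (span T (f '' X)) c1 = 2 := by
    refine le_antisymm (setEcc_le hAne fun z hz => ?_) (dc1y2 ▸ le_setEcc hy2A)
    rw [dcomm]
    exact (stepA z (hbound3 z hz y1 hy1A) (hbound3 z hz y2 hy2A)).1
  have heccc2 : setEcc T (span T (f '' X)) c2 = 2 := by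
    refine le_antisymm (setEcc_le hAne fun z hz => ?_) (dc2y1 ▸ le_setEcc hy1A)
    rw [dcomm]
    exact (stepA z (hbound3 z hz y1 hy1A) (hbound3 z hz y2 hy2A)).2
  have hradA : setRad T (span T (f '' X)) = 2 := by
    refine le_antisymm (heccc1 ▸ setRad_le hc1A) (le_setRad hAne fun z hz => ?_)
    have t1 : T.dist z y1 ≤ setEcc T (span T (f '' X)) z := le_setEcc hy1A
    have t2 : T.dist z y2 ≤ setEcc T (span T (f '' X)) z := le_setEcc hy2A
    have tri : T.dist y1 y2 ≤ T.dist y1 z + T.dist z y2 := hT.isConnected.dist_triangle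
    have hc : T.dist y1 z = T.dist z y1 := dcomm T y1 z
    omega
  have hc1C : c1 ∈ setCenter T (span T (f '' X)) := ⟨hc1A, heccc1.trans hradA.symm⟩
  have hc2C : c2 ∈ setCenter T (span T (f '' X)) := ⟨hc2A, heccc2.trans hradA.symm⟩
  -- m is one of c1, c2
  have hmy1 : T.dist m y1 ≤ 2 := by
    rw [dcomm]; exact hm_all y1 (hABsub hy1A)
  have hmy2 : T.dist m y2 ≤ 2 := by
    rw [dcomm]; exact hm_all y2 (hABsub hy2A)
  have hmc : m = c1 ∨ m = c2 := stepAC m hmy1 hmy2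
  have hmC : m ∈ setCenter T (span T (f '' X)) := by
    rcases hmc with rfl | rfl
    · exact hc1C
    · exact hc2C
  have hc1c2 : c1 ≠ c2 := by
    intro h
    rw [h] at dc1c2
    simp [SimpleGraph.dist_self] at dc1c2
  refine ⟨?_, hdB, ⟨m, hcB⟩⟩
  rw [hcB]
  rw [Set.ssubset_iff_of_subset (Set.singleton_subset_iff.2 hmC)]
  rcases hmc with rfl | rfl
  · exact ⟨c2, hc2C, by simpa using hc1c2.symm⟩
  · exact ⟨c1, hc1C, by simpa using hc1c2⟩
end

section
/- Let T be a 4-Steiner root of a graph G, let X be a clique-intersection of G, and let S ⊆ X be a minimal separator of G with S ⊊ X. If T⟨S⟩ is a star that is not a single edge (diam(T⟨S⟩) = 2), then there exists a node c at distance at most 1 from the center of T⟨X⟩ in T such that Real(N_T[c]) = S, namely c is the center of T⟨S⟩. -/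
def IsUVSep {α : Type*} (G : SimpleGraph α) (S : Set α) (u v : α) : Prop :=
  u ∉ S ∧ v ∉ S ∧ ∀ p : G.Walk u v, ∃ w ∈ p.support, w ∈ S

def IsMinSep {α : Type*} (G : SimpleGraph α) (S : Set α) : Prop :=
  ∃ u v : α, u ≠ v ∧ ¬ G.Adj u v ∧ IsUVSep G S u v ∧
    ∀ S' ⊂ S, ¬ IsUVSep G S' u v



set_option linter.unusedSectionVars false
set_option linter.unusedVariables false
set_option maxHeartbeats 2000000

/-- Metric betweenness. -/
def TBtw {β : Type*} (T : SimpleGraph β) (a w b : β) : Prop :=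
  T.dist a w + T.dist w b = T.dist a b

namespace TreeAux

open SimpleGraph

variable {β : Type*} {T : SimpleGraph β}

lemma btw_self (T : SimpleGraph β) (a : β) : TBtw T a a a := by
  simp [TBtw]

lemma btw_symm {a w b : β} (h : TBtw T a w b) : TBtw T b w a := by
  unfold TBtw at h ⊢
  have h1 : T.dist b w = T.dist w b := dist_comm
  have h2 : T.dist w a = T.dist a w := dist_comm
  have h3 : T.dist b a = T.dist a b := dist_comm
  omega

lemma path_length (hT : T.IsTree) {a b : β} {p : T.Walk a b} (hp : p.IsPath) :
    p.length = T.dist a b := by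
  obtain ⟨q, hq, hql⟩ := hT.isConnected.exists_path_of_dist a b
  have : (⟨p, hp⟩ : T.Path a b) = ⟨q, hq⟩ := hT.IsAcyclic.path_unique _ _
  have hpq : p = q := congrArg Subtype.val this
  rw [hpq, hql]

lemma btw_of_mem (hT : T.IsTree) {a b w : β} {p : T.Walk a b} (hp : p.IsPath)
    (hw : w ∈ p.support) : TBtw T a w b := by
  classical
  have h1 : (p.takeUntil w hw).length = T.dist a w := path_length hT (hp.takeUntil hw)
  have h2 : (p.dropUntil w hw).length = T.dist w b := path_length hT (hp.dropUntil hw)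
  have h3 : p.length = T.dist a b := path_length hT hp
  have := congrArg SimpleGraph.Walk.length (p.take_spec hw)
  rw [SimpleGraph.Walk.length_append] at this
  unfold TBtw
  omega

lemma btw_mem_path (hT : T.IsTree) {a b w : β} (hbtw : TBtw T a w b)
    {p : T.Walk a b} (hp : p.IsPath) : w ∈ p.support := by
  obtain ⟨q1, hq1, hl1⟩ := hT.isConnected.exists_path_of_dist a w
  obtain ⟨q2, hq2, hl2⟩ := hT.isConnected.exists_path_of_dist w b
  have hlen : (q1.append q2).length = T.dist a b := by
    rw [SimpleGraph.Walk.length_append, hl1, hl2]; exact hbtw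
  have hpath : (q1.append q2).IsPath := (q1.append q2).isPath_of_length_eq_dist hlen
  have : (⟨p, hp⟩ : T.Path a b) = ⟨q1.append q2, hpath⟩ := hT.IsAcyclic.path_unique _ _
  have hpq : p = q1.append q2 := congrArg Subtype.val this
  rw [hpq]
  exact SimpleGraph.Walk.subset_support_append_left _ _ q1.end_mem_support

/-- Two points between `a` and `d` are comparable. -/
lemma btw_total (hT : T.IsTree) {a b c d : β} (hb : TBtw T a b d) (hc : TBtw T a c d) :
    TBtw T a b c ∨ TBtw T a c b := by
  classical
  obtain ⟨p, hp, _⟩ := hT.isConnected.exists_path_of_dist a d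
  have hbp : b ∈ p.support := btw_mem_path hT hb hp
  have hcp : c ∈ p.support := btw_mem_path hT hc hp
  rw [← p.take_spec hbp, SimpleGraph.Walk.mem_support_append_iff] at hcp
  rcases hcp with hcp | hcp
  · exact Or.inr (btw_of_mem hT (hp.takeUntil hbp) hcp)
  · -- c is after b: TBtw b c d, derive TBtw a b c
    have hbcd : TBtw T b c d := btw_of_mem hT (hp.dropUntil hbp) hcp
    left
    unfold TBtw at *
    have t1 : T.dist a c ≤ T.dist a b + T.dist b c := hT.isConnected.dist_triangle
    have t2 : T.dist a d ≤ T.dist a c + T.dist c d := hT.isConnected.dist_triangle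
    omega

/-- Median of three points. -/
lemma median (hT : T.IsTree) (a b c : β) :
    ∃ m, TBtw T a m b ∧ TBtw T a m c ∧ TBtw T b m c := by
  classical
  obtain ⟨p, hp, _⟩ := hT.isConnected.exists_path_of_dist b c
  obtain ⟨m, hm, hmin⟩ := Finset.exists_min_image p.support.toFinset (T.dist a)
    ⟨b, by simp⟩
  rw [List.mem_toFinset] at hm
  have hbmc : TBtw T b m c := btw_of_mem hT hp hm
  obtain ⟨q, hq, hql⟩ := hT.isConnected.exists_path_of_dist a m
  have key : ∀ z ∈ q.support, z ∈ p.support → z = m := by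
    intro z hzq hzp
    have h1 : TBtw T a z m := btw_of_mem hT hq hzq
    have h2 : T.dist a m ≤ T.dist a z := hmin z (List.mem_toFinset.mpr hzp)
    unfold TBtw at h1
    have : T.dist z m = 0 := by omega
    exact (hT.isConnected.dist_eq_zero_iff).mp this
  have happ : ∀ {e : β} (r : T.Walk m e), r.IsPath → (∀ z ∈ r.support, z ∈ p.support) →
      TBtw T a m e := by
    intro e r hr hrsub
    have hdisj : ∀ z ∈ q.support, z ∈ r.support → z = m := fun z hzq hzr =>
      key z hzq (hrsub z hzr)
    have hnodup : (q.append r).IsPath := by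
      rw [SimpleGraph.Walk.isPath_def, SimpleGraph.Walk.support_append, List.nodup_append]
      refine ⟨hq.support_nodup, ?_, ?_⟩
      · have := hr.support_nodup
        rw [r.support_eq_cons] at this
        exact this.of_cons
      · intro z hzq z' hzr hzz
        rw [← hzz] at hzr
        have hzr' : z ∈ r.support := List.tail_subset _ hzr
        have : z = m := hdisj z hzq hzr'
        subst this
        have := hr.support_nodup
        rw [r.support_eq_cons] at this
        rw [r.support_eq_cons] at hzr
        exact (List.nodup_cons.mp this).1 hzr
    have hlen : (q.append r).length = T.dist a m + T.dist m e := by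
      rw [SimpleGraph.Walk.length_append, hql, path_length hT hr]
    have := path_length hT hnodup
    unfold TBtw
    omega
  refine ⟨m, ?_, ?_, hbmc⟩
  · have := happ ((p.takeUntil m hm).reverse) ((hp.takeUntil hm).reverse) ?_
    · exact this
    · intro z hz
      rw [SimpleGraph.Walk.support_reverse, List.mem_reverse] at hz
      exact p.support_takeUntil_subset hm hz
  · exact happ (p.dropUntil m hm) (hp.dropUntil hm)
      (fun z hz => p.support_dropUntil_subset hm hz)

lemma getVert_dist (hT : T.IsTree) {a b : β} {p : T.Walk a b} (hp : p.IsPath) :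
    ∀ t, t ≤ p.length → T.dist a (p.getVert t) = t ∧ T.dist (p.getVert t) b = p.length - t := by
  induction p with
  | nil =>
    intro t ht
    simp at ht
    subst ht
    simp [SimpleGraph.dist_self]
  | @cons u v w h q ih =>
    intro t ht
    have hq : q.IsPath := ((SimpleGraph.Walk.cons_isPath_iff h q).mp hp).1
    match t with
    | 0 =>
      constructor
      · simp [SimpleGraph.dist_self]
      · rw [SimpleGraph.Walk.getVert_zero, Nat.sub_zero]
        exact (path_length hT hp).symm
    | Nat.succ t =>
      rw [SimpleGraph.Walk.getVert_cons_succ]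
      have ht' : t ≤ q.length := by simp at ht; omega
      obtain ⟨ih1, ih2⟩ := ih hq t ht'
      have hlen : (SimpleGraph.Walk.cons h q).length = T.dist u w := path_length hT hp
      have hqlen : q.length = T.dist v w := path_length hT hq
      have t1 : T.dist u (q.getVert t) ≤ T.dist u v + T.dist v (q.getVert t) :=
        hT.isConnected.dist_triangle
      have t2 : T.dist u w ≤ T.dist u (q.getVert t) + T.dist (q.getVert t) w :=
        hT.isConnected.dist_triangle
      have huv : T.dist u v = 1 := SimpleGraph.dist_eq_one_iff_adj.mpr h
      have hcons : (SimpleGraph.Walk.cons h q).length = q.length + 1 := by simp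
      constructor
      · omega
      · omega

lemma exists_btw_at (hT : T.IsTree) {a b : β} {t : ℕ} (ht : t ≤ T.dist a b) :
    ∃ m, T.dist a m = t ∧ TBtw T a m b := by
  obtain ⟨p, hp, hl⟩ := hT.isConnected.exists_path_of_dist a b
  refine ⟨p.getVert t, ?_, ?_⟩
  · exact (getVert_dist hT hp t (by omega)).1
  · obtain ⟨h1, h2⟩ := getVert_dist hT hp t (by omega)
    unfold TBtw
    omega

lemma mem_span_iff (hT : T.IsTree) {A : Set β} {w : β} :
    w ∈ span T A ↔ ∃ a ∈ A, ∃ b ∈ A, TBtw T a w b := by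
  constructor
  · rintro ⟨a, ha, b, hb, p, hp, hw⟩
    exact ⟨a, ha, b, hb, btw_of_mem hT hp hw⟩
  · rintro ⟨a, ha, b, hb, hbtw⟩
    obtain ⟨p, hp, _⟩ := hT.isConnected.exists_path_of_dist a b
    exact ⟨a, ha, b, hb, p, hp, btw_mem_path hT hbtw hp⟩

lemma mem_span_of_mem (hT : T.IsTree) {A : Set β} {a : β} (ha : a ∈ A) : a ∈ span T A :=
  (mem_span_iff hT).mpr ⟨a, ha, a, ha, btw_self T a⟩

/-- `dist w z ≤ max (dist w a) (dist w b)` when `z` is between `a` and `b`. -/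
lemma dist_le_max (hT : T.IsTree) {a b z w : β} (hz : TBtw T a z b) :
    T.dist w z ≤ max (T.dist w a) (T.dist w b) := by
  obtain ⟨m, hma, hmb, hamb⟩ := median hT w a b
  rcases btw_total hT hamb hz with hmz | hzm
  · -- TBtw a m z : use b side
    have t1 : T.dist w z ≤ T.dist w m + T.dist m z := hT.isConnected.dist_triangle
    unfold TBtw at *
    have hcm : T.dist a m = T.dist m a := dist_comm
    have hcz : T.dist a z = T.dist z a := dist_comm
    have : T.dist w z ≤ T.dist w b := by omega
    omega
  · -- TBtw a z m : use a side
    have t1 : T.dist w z ≤ T.dist w m + T.dist m z := hT.isConnected.dist_triangle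
    unfold TBtw at *
    have hcm : T.dist a m = T.dist m a := dist_comm
    have hcz : T.dist a z = T.dist z a := dist_comm
    have hczm : T.dist z m = T.dist m z := dist_comm
    have : T.dist w z ≤ T.dist w a := by omega
    omega

end TreeAux


namespace TreeAux

open SimpleGraph

variable {β : Type*} {T : SimpleGraph β}

section Star

variable {x y c : β} (hT : T.IsTree)
  (hxc : T.dist x c = 1) (hcy : T.dist c y = 1) (hxy : T.dist x y = 2)

include hT hxc hcy hxy

lemma star_mid3 {p : β} {k : ℕ} (hpx : T.dist p x ≤ k) (hpy : T.dist p y ≤ k)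
    (hk : 1 ≤ k) : T.dist p c ≤ k - 1 := by
  obtain ⟨m, hpmx, hpmy, hxmy⟩ := median hT p x y
  have hcx : T.dist c x = T.dist x c := dist_comm
  have hyc : T.dist y c = T.dist c y := dist_comm
  have hyx : T.dist y x = T.dist x y := dist_comm
  have hmx : T.dist m x = T.dist x m := dist_comm
  have hmy' : T.dist m y = T.dist y m := dist_comm
  have t1 : T.dist p c ≤ T.dist p x + T.dist x c := hT.isConnected.dist_triangle
  have t2 : T.dist p c ≤ T.dist p y + T.dist y c := hT.isConnected.dist_triangle
  have hsum : T.dist x m + T.dist m y = 2 := by unfold TBtw at hxmy; omega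
  rcases (show T.dist x m = 0 ∨ T.dist x m = 1 ∨ T.dist x m = 2 by omega) with h0 | h1 | h2
  · -- m = x
    have : x = m := hT.isConnected.dist_eq_zero_iff.mp h0
    subst this
    unfold TBtw at hpmy hpmx
    omega
  · -- m = c
    have hxcy : TBtw T x c y := by unfold TBtw; omega
    have hmc : m = c := by
      rcases btw_total hT hxmy hxcy with hh | hh <;>
      · unfold TBtw at hh
        have hcm : T.dist c m = T.dist m c := dist_comm
        exact hT.isConnected.dist_eq_zero_iff.mp (by omega)
    rw [hmc] at hpmx
    unfold TBtw at hpmx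
    have hcx' : T.dist c x = T.dist x c := dist_comm
    omega
  · -- m = y
    have hmy0 : T.dist m y = 0 := by omega
    have : m = y := hT.isConnected.dist_eq_zero_iff.mp hmy0
    subst this
    unfold TBtw at hpmx hpmy
    omega

lemma star_excl {p : β} (h1 : TBtw T p x c) (h2 : TBtw T p y c) : False := by
  have hyc : T.dist y c = T.dist c y := dist_comm
  have hyx : T.dist y x = T.dist x y := dist_comm
  rcases btw_total hT h1 h2 with hh | hh <;>
  · unfold TBtw at h1 h2 hh
    omega

lemma star_type {p : β} (h4 : 4 ≤ T.dist p c) (hpx : T.dist p x ≤ 4) : TBtw T p x c := by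
  obtain ⟨m, hpmx, hpmy, hxmy⟩ := median hT p x y
  have hcx : T.dist c x = T.dist x c := dist_comm
  have hyc : T.dist y c = T.dist c y := dist_comm
  have hyx : T.dist y x = T.dist x y := dist_comm
  have t1 : T.dist p c ≤ T.dist p x + T.dist x c := hT.isConnected.dist_triangle
  have t2 : T.dist p c ≤ T.dist p y + T.dist y c := hT.isConnected.dist_triangle
  have t3 : T.dist p y ≤ T.dist p c + T.dist c y := hT.isConnected.dist_triangle
  have hsum : T.dist x m + T.dist m y = 2 := by unfold TBtw at hxmy; omega
  rcases (show T.dist x m = 0 ∨ T.dist x m = 1 ∨ T.dist x m = 2 by omega) with h0 | h1 | h2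
  · -- m = x
    have : x = m := hT.isConnected.dist_eq_zero_iff.mp h0
    subst this
    unfold TBtw at hpmy hpmx ⊢
    omega
  · -- m = c : contradiction
    have hxcy : TBtw T x c y := by unfold TBtw; omega
    have hmc : m = c := by
      rcases btw_total hT hxmy hxcy with hh | hh <;>
      · unfold TBtw at hh
        have hcm : T.dist c m = T.dist m c := dist_comm
        exact hT.isConnected.dist_eq_zero_iff.mp (by omega)
    rw [hmc] at hpmx
    unfold TBtw at hpmx ⊢
    have hcx' : T.dist c x = T.dist x c := dist_comm
    omega
  · -- m = y : contradiction
    have hmy0 : T.dist m y = 0 := by omega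
    have : m = y := hT.isConnected.dist_eq_zero_iff.mp hmy0
    subst this
    unfold TBtw at hpmx hpmy ⊢
    omega

lemma branch_transfer {p p' : β} (hp : TBtw T p x c) (h4 : 4 ≤ T.dist p c)
    (h4' : 4 ≤ T.dist p' c) (hpp' : T.dist p p' ≤ 4) : TBtw T p' x c := by
  obtain ⟨m, hcmp, hcmp', hpmp'⟩ := median hT c p p'
  have hmc2 : 2 ≤ T.dist m c := by
    unfold TBtw at hcmp hcmp' hpmp'
    have e1 : T.dist c m = T.dist m c := dist_comm
    have e2 : T.dist m p = T.dist p m := dist_comm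
    have e3 : T.dist m p' = T.dist p' m := dist_comm
    have e4 : T.dist c p = T.dist p c := dist_comm
    have e5 : T.dist c p' = T.dist p' c := dist_comm
    omega
  have hpmc : TBtw T p m c := btw_symm hcmp
  rcases btw_total hT hp hpmc with hh | hh
  · -- TBtw p x m : impossible since dist m c ≥ 2
    exfalso
    unfold TBtw at hh hp hpmc
    have t : T.dist x c ≤ T.dist x m + T.dist m c := hT.isConnected.dist_triangle
    have e : T.dist m x = T.dist x m := dist_comm
    omega
  · -- TBtw p m x
    unfold TBtw at hh hp hpmc ⊢
    have hp'mc : TBtw T p' m c := btw_symm hcmp'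
    unfold TBtw at hp'mc
    have t1 : T.dist m c ≤ T.dist m x + T.dist x c := hT.isConnected.dist_triangle
    have t2 : T.dist p' x ≤ T.dist p' m + T.dist m x := hT.isConnected.dist_triangle
    have t3 : T.dist p' c ≤ T.dist p' x + T.dist x c := hT.isConnected.dist_triangle
    have e1 : T.dist m x = T.dist x m := dist_comm
    omega

end Star

lemma ecc_mid (hT : T.IsTree) {x' y' m z : β} {D u : ℕ} (hxy : T.dist x' y' = D)
    (hm : TBtw T x' m y') (hu : T.dist x' m = u) (hz1 : T.dist z x' ≤ D)
    (hz2 : T.dist z y' ≤ D) : T.dist z m ≤ max u (D - u) := by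
  obtain ⟨w, hzwx, hzwy, hxwy⟩ := median hT z x' y'
  have t1 : T.dist z m ≤ T.dist z w + T.dist w m := hT.isConnected.dist_triangle
  rcases btw_total hT hxwy hm with hh | hh <;>
  · unfold TBtw at hzwx hzwy hxwy hm hh
    have e1 : T.dist w x' = T.dist x' w := dist_comm
    have e2 : T.dist w y' = T.dist y' w := dist_comm
    have e3 : T.dist m w = T.dist w m := dist_comm
    have e4 : T.dist m y' = T.dist y' m := dist_comm
    rcases Nat.le_total u (D - u) with hcase | hcase <;>
      [rw [Nat.max_eq_right hcase]; rw [Nat.max_eq_left hcase]] <;> omega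

lemma center_close (hT : T.IsTree) {x' y' m m' c : β} {D : ℕ} (hD2 : 2 ≤ D) (hD4 : D ≤ 4)
    (hxy : T.dist x' y' = D)
    (hm : TBtw T x' m y') (hum : T.dist x' m = (D + 1) / 2)
    (hm' : TBtw T x' m' y') (hum' : T.dist x' m' = D - (D + 1) / 2)
    (hc1 : T.dist c x' ≤ 3) (hc2 : T.dist c y' ≤ 3)
    (hc1' : T.dist c x' ≤ D) (hc2' : T.dist c y' ≤ D) :
    T.dist c m ≤ 1 ∨ T.dist c m' ≤ 1 := by
  obtain ⟨w, hcwx, hcwy, hxwy⟩ := median hT c x' y'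
  have t1 : T.dist c m ≤ T.dist c w + T.dist w m := hT.isConnected.dist_triangle
  have t2 : T.dist c m' ≤ T.dist c w + T.dist w m' := hT.isConnected.dist_triangle
  have e1 : T.dist w x' = T.dist x' w := dist_comm
  have e2 : T.dist w y' = T.dist y' w := dist_comm
  have e3 : T.dist m w = T.dist w m := dist_comm
  have e4 : T.dist m y' = T.dist y' m := dist_comm
  have e5 : T.dist m' w = T.dist w m' := dist_comm
  have e6 : T.dist m' y' = T.dist y' m' := dist_comm
  rcases btw_total hT hxwy hm with hh | hh <;>
    rcases btw_total hT hxwy hm' with hh' | hh' <;>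
  · unfold TBtw at hcwx hcwy hxwy hm hm' hh hh'
    omega

end TreeAux



open SimpleGraph TreeAux

/-- Reachability avoiding a set. -/
def ReachAvoid {α : Type*} (G : SimpleGraph α) (S : Set α) (w z : α) : Prop :=
  ∃ q : G.Walk w z, ∀ t ∈ q.support, t ∉ S

lemma reach_extract {α : Type*} {G : SimpleGraph α} {S : Set α} {s : α} (hs : s ∈ S) :
    ∀ {u v : α} (p : G.Walk u v), u ∉ S → (∀ w ∈ p.support, w ∈ S → w = s) →
    (∃ w ∈ p.support, w ∈ S) → ∃ b, b ∉ S ∧ G.Adj b s ∧ ReachAvoid G S u b := by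
  intro u v p
  induction p with
  | nil =>
    intro hu _ hin
    obtain ⟨w, hw, hwS⟩ := hin
    simp only [SimpleGraph.Walk.support_nil, List.mem_singleton] at hw
    subst hw
    exact absurd hwS hu
  | @cons a1 a2 a3 hadj q ih =>
    intro hu hsub hin
    by_cases h2 : a2 ∈ S
    · have he : a2 = s := hsub a2 (by
        rw [SimpleGraph.Walk.support_cons]
        exact List.mem_cons_of_mem _ q.start_mem_support) h2
      subst he
      exact ⟨a1, hu, hadj, ⟨SimpleGraph.Walk.nil, by
        intro t ht
        simp only [SimpleGraph.Walk.support_nil, List.mem_singleton] at ht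
        subst ht; exact hu⟩⟩
    · obtain ⟨w, hw, hwS⟩ := hin
      rw [SimpleGraph.Walk.support_cons, List.mem_cons] at hw
      have hw' : w ∈ q.support := by
        rcases hw with hw | hw
        · exact absurd hwS (hw ▸ hu)
        · exact hw
      obtain ⟨b, hbS, hbadj, ⟨r, hr⟩⟩ := ih h2
        (fun w hw hwS => hsub w (by
          rw [SimpleGraph.Walk.support_cons]; exact List.mem_cons_of_mem _ hw) hwS)
        ⟨w, hw', hwS⟩
      refine ⟨b, hbS, hbadj, ⟨SimpleGraph.Walk.cons hadj r, ?_⟩⟩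
      intro t ht
      rw [SimpleGraph.Walk.support_cons, List.mem_cons] at ht
      rcases ht with ht | ht
      · exact ht ▸ hu
      · exact hr t ht

lemma walk_invar {α β : Type*} {G : SimpleGraph α} {T : SimpleGraph β} {f : α → β}
    (hT : T.IsTree)
    (hiff : ∀ u v : α, u ≠ v → (G.Adj u v ↔ T.dist (f u) (f v) ≤ 4))
    {x y c : β} (hxc : T.dist x c = 1) (hcy : T.dist c y = 1) (hxy : T.dist x y = 2)
    {b₁ b₂ : α} (q : G.Walk b₁ b₂) :
    (∀ t ∈ q.support, 4 ≤ T.dist (f t) c) → TBtw T (f b₁) x c → TBtw T (f b₂) x c := by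
  induction q with
  | nil => exact fun _ h => h
  | @cons a1 a2 a3 hadj q ih =>
    intro hsup h
    have h1 : 4 ≤ T.dist (f a1) c := hsup a1 (by
      rw [SimpleGraph.Walk.support_cons]; exact List.mem_cons_self)
    have h2 : 4 ≤ T.dist (f a2) c := hsup a2 (by
      rw [SimpleGraph.Walk.support_cons]; exact List.mem_cons_of_mem _ q.start_mem_support)
    have h3 : T.dist (f a1) (f a2) ≤ 4 := (hiff a1 a2 hadj.ne).1 hadj
    exact ih (fun t ht => hsup t (by
      rw [SimpleGraph.Walk.support_cons]; exact List.mem_cons_of_mem _ ht))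
      (branch_transfer hT hxc hcy hxy h h1 h2 h3)


open SimpleGraph TreeAux
/-- If `T` is a `4`-Steiner root of `G`, `S ⊊ X` is a minimal separator
strictly contained in a clique-intersection `X`, and `T⟨S⟩` is a non-edge
star (diameter 2), then the center `c` of `T⟨S⟩` is at distance at most `1`
from the center of `T⟨X⟩` and satisfies `Real(N_T[c]) = S`. -/
theorem stmt15 {α β : Type*} [Fintype α] [Fintype β]
    (G : SimpleGraph α) (hG : G.Connected) (T : SimpleGraph β) (f : α → β)
    (hroot : IsSteinerRoot 4 G T f) (X S : Set α)
    (hX : IsCliqueIntersection G X) (hS : IsMinSep G S) (hsub : S ⊂ X)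
    (hd : setDiam T (span T (f '' S)) = 2) :
    ∃ c : β, c ∈ setCenter T (span T (f '' S)) ∧
      (∃ c' ∈ setCenter T (span T (f '' X)), T.dist c c' ≤ 1) ∧
      {w | w = c ∨ T.Adj c w} ∩ Set.range f = f '' S := by
  classical
  obtain ⟨finj, hT, hiff⟩ := hroot
  obtain ⟨𝒦, ⟨K₀, hK₀⟩, hmax, hXeq⟩ := hX
  have hXK : X ⊆ K₀ := hXeq ▸ Set.sInter_subset_of_mem hK₀
  have hXcl : G.IsClique X := ((hmax K₀ hK₀).1).subset hXK
  have hSX : S ⊆ X := hsub.1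
  have himg4 : ∀ a ∈ X, ∀ b ∈ X, T.dist (f a) (f b) ≤ 4 := by
    intro a ha b hb
    by_cases hab : a = b
    · subst hab; simp [SimpleGraph.dist_self]
    · exact (hiff a b hab).1 (hXcl ha hb hab)
  set spanS := span T (f '' S) with hspanSdef
  set spanX := span T (f '' X) with hspanXdef
  have hmono : spanS ⊆ spanX := by
    rintro w ⟨u, hu, v, hv, p, hp, hw⟩
    exact ⟨u, Set.image_mono hSX hu, v, Set.image_mono hSX hv, p, hp, hw⟩
  -- reduction of span distances to image distances
  have hpair : ∀ (A : Set α), ∀ z ∈ span T (f '' A), ∀ z' ∈ span T (f '' A),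
      ∃ a ∈ A, ∃ b ∈ A, T.dist z z' ≤ T.dist (f a) (f b) := by
    intro A z hz z' hz'
    obtain ⟨u, ⟨a, ha, rfl⟩, v, ⟨b, hb, rfl⟩, hbtw⟩ := (mem_span_iff hT).mp hz
    obtain ⟨u', ⟨a', ha', rfl⟩, v', ⟨b', hb', rfl⟩, hbtw'⟩ := (mem_span_iff hT).mp hz'
    have h1 : T.dist z' z ≤ max (T.dist z' (f a)) (T.dist z' (f b)) := dist_le_max hT hbtw
    have h2 : T.dist (f a) z' ≤ max (T.dist (f a) (f a')) (T.dist (f a) (f b')) :=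
      dist_le_max hT hbtw'
    have h3 : T.dist (f b) z' ≤ max (T.dist (f b) (f a')) (T.dist (f b) (f b')) :=
      dist_le_max hT hbtw'
    have e1 : T.dist z z' = T.dist z' z := dist_comm
    have e2 : T.dist z' (f a) = T.dist (f a) z' := dist_comm
    have e3 : T.dist z' (f b) = T.dist (f b) z' := dist_comm
    rcases le_max_iff.mp h1 with h | h
    · rcases le_max_iff.mp h2 with hh | hh
      · exact ⟨a, ha, a', ha', by omega⟩
      · exact ⟨a, ha, b', hb', by omega⟩
    · rcases le_max_iff.mp h3 with hh | hh
      · exact ⟨b, hb, a', ha', by omega⟩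
      · exact ⟨b, hb, b', hb', by omega⟩
  have hpairX4 : ∀ z ∈ spanX, ∀ z' ∈ spanX, T.dist z z' ≤ 4 := by
    intro z hz z' hz'
    obtain ⟨a, ha, b, hb, hle⟩ := hpair X z hz z' hz'
    exact le_trans hle (himg4 a ha b hb)
  -- spanS: diameter 2
  have hbddS : BddAbove {d | ∃ u ∈ spanS, ∃ w ∈ spanS, T.dist u w = d} := by
    refine ⟨4, ?_⟩
    rintro d ⟨u, hu, w, hw, rfl⟩
    exact hpairX4 u (hmono hu) w (hmono hw)
  have hdS : sSup {d | ∃ u ∈ spanS, ∃ w ∈ spanS, T.dist u w = d} = 2 := hd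
  have hpairS2 : ∀ z ∈ spanS, ∀ z' ∈ spanS, T.dist z z' ≤ 2 := by
    intro z hz z' hz'
    rw [← hdS]
    exact le_csSup hbddS ⟨z, hz, z', hz', rfl⟩
  have hSne : {d | ∃ u ∈ spanS, ∃ w ∈ spanS, T.dist u w = d}.Nonempty := by
    by_contra h
    rw [Set.not_nonempty_iff_eq_empty] at h
    rw [h, csSup_empty] at hdS
    simp at hdS
  obtain ⟨z0, hz0, z0', hz0', hz00⟩ : ∃ u ∈ spanS, ∃ w ∈ spanS, T.dist u w = 2 := by
    have := Nat.sSup_mem hSne hbddS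
    rw [hdS] at this
    exact this
  obtain ⟨s₁, hs₁, s₂, hs₂, hge2⟩ := hpair S z0 hz0 z0' hz0'
  have hxmemS : f s₁ ∈ spanS := mem_span_of_mem hT ⟨s₁, hs₁, rfl⟩
  have hymemS : f s₂ ∈ spanS := mem_span_of_mem hT ⟨s₂, hs₂, rfl⟩
  set x := f s₁ with hxdef
  set y := f s₂ with hydef
  have hxy : T.dist x y = 2 :=
    le_antisymm (hpairS2 x hxmemS y hymemS) (by omega)
  obtain ⟨c, hxc, hxcy⟩ := exists_btw_at hT (show 1 ≤ T.dist x y by omega)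
  have hcy : T.dist c y = 1 := by unfold TBtw at hxcy; omega
  have hcmemS : c ∈ spanS :=
    (mem_span_iff hT).mpr ⟨x, ⟨s₁, hs₁, rfl⟩, y, ⟨s₂, hs₂, rfl⟩, hxcy⟩
  have heccc : ∀ z ∈ spanS, T.dist c z ≤ 1 := by
    intro z hz
    have h1 : T.dist z x ≤ 2 := hpairS2 z hz x hxmemS
    have h2 : T.dist z y ≤ 2 := hpairS2 z hz y hymemS
    have h3 := star_mid3 hT hxc hcy hxy h1 h2 (by norm_num)
    have e : T.dist c z = T.dist z c := dist_comm
    omega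
  have heccS : setEcc T spanS c = 1 := by
    have hcx : T.dist c x = 1 := by
      have : T.dist c x = T.dist x c := dist_comm
      omega
    unfold setEcc
    apply le_antisymm
    · refine csSup_le ⟨1, x, hxmemS, hcx⟩ ?_
      rintro d ⟨u, hu, rfl⟩
      exact heccc u hu
    · exact le_csSup ⟨1, by rintro d ⟨u, hu, rfl⟩; exact heccc u hu⟩ ⟨x, hxmemS, hcx⟩
  have hecc_ge1 : ∀ v ∈ spanS, 1 ≤ setEcc T spanS v := by
    intro v hv
    have hb : BddAbove {d | ∃ u ∈ spanS, T.dist v u = d} := by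
      refine ⟨2, ?_⟩
      rintro d ⟨u, hu, rfl⟩
      exact hpairS2 v hv u hu
    by_cases h0 : T.dist v x = 0
    · have hvx : v = x := hT.isConnected.dist_eq_zero_iff.mp h0
      have h2 : T.dist v y = 2 := by rw [hvx]; exact hxy
      have := le_csSup hb ⟨y, hymemS, rfl⟩
      unfold setEcc
      omega
    · have := le_csSup hb ⟨x, hxmemS, rfl⟩
      unfold setEcc
      omega
  have hradS : setRad T spanS = 1 := by
    apply le_antisymm
    · exact Nat.sInf_le ⟨c, hcmemS, heccS⟩
    · exact le_csInf ⟨1, c, hcmemS, heccS⟩ (by rintro e ⟨v, hv, rfl⟩; exact hecc_ge1 v hv)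
  have hcCenter : c ∈ setCenter T spanS := ⟨hcmemS, by rw [heccS, hradS]⟩
  -- ===== Part 2 : the center of spanX =====
  set DX := setDiam T spanX with hDXdef
  have hbddX : BddAbove {d | ∃ u ∈ spanX, ∃ w ∈ spanX, T.dist u w = d} := by
    refine ⟨4, ?_⟩
    rintro d ⟨u, hu, w, hw, rfl⟩
    exact hpairX4 u hu w hw
  have hXne : {d | ∃ u ∈ spanX, ∃ w ∈ spanX, T.dist u w = d}.Nonempty :=
    ⟨2, x, hmono hxmemS, y, hmono hymemS, hxy⟩
  have hDXS : sSup {d | ∃ u ∈ spanX, ∃ w ∈ spanX, T.dist u w = d} = DX := rfl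
  have hD2 : 2 ≤ DX := by
    rw [← hDXS]
    exact le_csSup hbddX ⟨x, hmono hxmemS, y, hmono hymemS, hxy⟩
  have hD4 : DX ≤ 4 := by
    rw [← hDXS]
    exact csSup_le hXne (by rintro d ⟨u, hu, w, hw, rfl⟩; exact hpairX4 u hu w hw)
  have hpairXD : ∀ z ∈ spanX, ∀ z' ∈ spanX, T.dist z z' ≤ DX := by
    intro z hz z' hz'
    rw [← hDXS]
    exact le_csSup hbddX ⟨z, hz, z', hz', rfl⟩
  obtain ⟨w1, hw1, w2, hw2, hw12⟩ : ∃ u ∈ spanX, ∃ w ∈ spanX, T.dist u w = DX := by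
    have := Nat.sSup_mem hXne hbddX
    rw [hDXS] at this
    exact this
  obtain ⟨x₁, hx₁, x₂, hx₂, hgeD⟩ := hpair X w1 hw1 w2 hw2
  have hx'memX : f x₁ ∈ spanX := mem_span_of_mem hT ⟨x₁, hx₁, rfl⟩
  have hy'memX : f x₂ ∈ spanX := mem_span_of_mem hT ⟨x₂, hx₂, rfl⟩
  set x' := f x₁ with hx'def
  set y' := f x₂ with hy'def
  have hxx' : T.dist x' y' = DX :=
    le_antisymm (hpairXD x' hx'memX y' hy'memX) (by omega)
  obtain ⟨m, hm1, hm2⟩ := exists_btw_at hT (show (DX + 1) / 2 ≤ T.dist x' y' by omega)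
  obtain ⟨m', hm'1, hm'2⟩ :=
    exists_btw_at hT (show DX - (DX + 1) / 2 ≤ T.dist x' y' by omega)
  have hmX : m ∈ spanX :=
    (mem_span_iff hT).mpr ⟨x', ⟨x₁, hx₁, rfl⟩, y', ⟨x₂, hx₂, rfl⟩, hm2⟩
  have hm'X : m' ∈ spanX :=
    (mem_span_iff hT).mpr ⟨x', ⟨x₁, hx₁, rfl⟩, y', ⟨x₂, hx₂, rfl⟩, hm'2⟩
  have heccm : setEcc T spanX m = (DX + 1) / 2 := by
    have hmx' : T.dist m x' = (DX + 1) / 2 := by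
      have : T.dist m x' = T.dist x' m := dist_comm
      omega
    unfold setEcc
    apply le_antisymm
    · refine csSup_le ⟨_, x', hx'memX, hmx'⟩ ?_
      rintro d ⟨u, hu, rfl⟩
      have := ecc_mid hT hxx' hm2 hm1 (hpairXD u hu x' hx'memX) (hpairXD u hu y' hy'memX)
      have e : T.dist m u = T.dist u m := dist_comm
      have hmax : max ((DX + 1) / 2) (DX - (DX + 1) / 2) = (DX + 1) / 2 := by omega
      omega
    · refine le_csSup ⟨(DX + 1) / 2, ?_⟩ ⟨x', hx'memX, hmx'⟩
      rintro d ⟨u, hu, rfl⟩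
      have := ecc_mid hT hxx' hm2 hm1 (hpairXD u hu x' hx'memX) (hpairXD u hu y' hy'memX)
      have e : T.dist m u = T.dist u m := dist_comm
      have hmax : max ((DX + 1) / 2) (DX - (DX + 1) / 2) = (DX + 1) / 2 := by omega
      omega
  have heccm' : setEcc T spanX m' = (DX + 1) / 2 := by
    have hm'y' : T.dist m' y' = (DX + 1) / 2 := by
      unfold TBtw at hm'2
      omega
    unfold setEcc
    apply le_antisymm
    · refine csSup_le ⟨_, y', hy'memX, hm'y'⟩ ?_
      rintro d ⟨u, hu, rfl⟩
      have := ecc_mid hT hxx' hm'2 hm'1 (hpairXD u hu x' hx'memX) (hpairXD u hu y' hy'memX)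
      have e : T.dist m' u = T.dist u m' := dist_comm
      have hmax : max (DX - (DX + 1) / 2) (DX - (DX - (DX + 1) / 2)) = (DX + 1) / 2 := by
        omega
      omega
    · refine le_csSup ⟨(DX + 1) / 2, ?_⟩ ⟨y', hy'memX, hm'y'⟩
      rintro d ⟨u, hu, rfl⟩
      have := ecc_mid hT hxx' hm'2 hm'1 (hpairXD u hu x' hx'memX) (hpairXD u hu y' hy'memX)
      have e : T.dist m' u = T.dist u m' := dist_comm
      have hmax : max (DX - (DX + 1) / 2) (DX - (DX - (DX + 1) / 2)) = (DX + 1) / 2 := by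
        omega
      omega
  have hradX_ge : ∀ v ∈ spanX, (DX + 1) / 2 ≤ setEcc T spanX v := by
    intro v hv
    have hb : BddAbove {d | ∃ u ∈ spanX, T.dist v u = d} := by
      refine ⟨DX, ?_⟩
      rintro d ⟨u, hu, rfl⟩
      exact hpairXD v hv u hu
    have a1 := le_csSup hb ⟨x', hx'memX, rfl⟩
    have a2 := le_csSup hb ⟨y', hy'memX, rfl⟩
    have t : T.dist x' y' ≤ T.dist x' v + T.dist v y' := hT.isConnected.dist_triangle
    have e : T.dist x' v = T.dist v x' := dist_comm
    unfold setEcc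
    omega
  have hradX : setRad T spanX = (DX + 1) / 2 := by
    apply le_antisymm
    · exact Nat.sInf_le ⟨m, hmX, heccm⟩
    · exact le_csInf ⟨_, m, hmX, heccm⟩ (by rintro e ⟨v, hv, rfl⟩; exact hradX_ge v hv)
  have hmCenter : m ∈ setCenter T spanX := ⟨hmX, by rw [heccm, hradX]⟩
  have hm'Center : m' ∈ setCenter T spanX := ⟨hm'X, by rw [heccm', hradX]⟩
  have hcx'3 : T.dist c x' ≤ 3 := by
    have h1 : T.dist x' x ≤ 4 := himg4 x₁ hx₁ s₁ (hSX hs₁)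
    have h2 : T.dist x' y ≤ 4 := himg4 x₁ hx₁ s₂ (hSX hs₂)
    have h3 := star_mid3 hT hxc hcy hxy h1 h2 (by norm_num)
    have e : T.dist c x' = T.dist x' c := dist_comm
    omega
  have hcy'3 : T.dist c y' ≤ 3 := by
    have h1 : T.dist y' x ≤ 4 := himg4 x₂ hx₂ s₁ (hSX hs₁)
    have h2 : T.dist y' y ≤ 4 := himg4 x₂ hx₂ s₂ (hSX hs₂)
    have h3 := star_mid3 hT hxc hcy hxy h1 h2 (by norm_num)
    have e : T.dist c y' = T.dist y' c := dist_comm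
    omega
  have hclose := center_close hT hD2 hD4 hxx' hm2 hm1 hm'2 hm'1 hcx'3 hcy'3
    (hpairXD c (hmono hcmemS) x' hx'memX) (hpairXD c (hmono hcmemS) y' hy'memX)
  -- ===== Part 3 : Real(N[c]) = S =====
  obtain ⟨u₀, v₀, hne0, hnadj, hsep, hmin⟩ := hS
  have hu0S : u₀ ∉ S := hsep.1
  have hv0S : v₀ ∉ S := hsep.2.1
  have hfull : ∀ s ∈ S, (∃ b, b ∉ S ∧ G.Adj b s ∧ ReachAvoid G S u₀ b) ∧
      (∃ b, b ∉ S ∧ G.Adj b s ∧ ReachAvoid G S v₀ b) := by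
    intro s hs
    have hss : S \ {s} ⊂ S := Set.sdiff_singleton_ssubset.mpr hs
    have hnsep := hmin _ hss
    unfold IsUVSep at hnsep
    push_neg at hnsep
    have hu : u₀ ∉ S \ {s} := fun h => hu0S h.1
    have hv : v₀ ∉ S \ {s} := fun h => hv0S h.1
    obtain ⟨p, hp⟩ := hnsep hu hv
    have hsub' : ∀ w ∈ p.support, w ∈ S → w = s := by
      intro w hw hwS
      by_contra hne
      exact (hp w hw) ⟨hwS, hne⟩
    have hinS : ∃ w ∈ p.support, w ∈ S := hsep.2.2 p
    constructor
    · exact reach_extract hs p hu0S hsub' hinS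
    · refine reach_extract hs p.reverse hv0S ?_ ?_
      · intro w hw
        rw [SimpleGraph.Walk.support_reverse, List.mem_reverse] at hw
        exact hsub' w hw
      · obtain ⟨w, hw, hwS⟩ := hinS
        exact ⟨w, by rw [SimpleGraph.Walk.support_reverse, List.mem_reverse]; exact hw, hwS⟩
  have key : ∀ a : α, T.dist c (f a) ≤ 1 → a ∈ S := by
    intro a hca
    by_contra haS
    have hreach : ∀ w₀ : α, w₀ ∉ S →
        (∀ s ∈ S, ∃ b, b ∉ S ∧ G.Adj b s ∧ ReachAvoid G S w₀ b) →
        ReachAvoid G S w₀ a := by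
      intro w₀ hw₀ hfl
      by_cases hnear : ∃ z, ReachAvoid G S w₀ z ∧ T.dist (f z) c ≤ 3
      · obtain ⟨z, ⟨q, hq⟩, hz3⟩ := hnear
        by_cases haz : a = z
        · subst haz; exact ⟨q, hq⟩
        · have hadj : G.Adj z a := by
            apply (hiff z a (Ne.symm haz)).2
            have t : T.dist (f z) (f a) ≤ T.dist (f z) c + T.dist c (f a) :=
              hT.isConnected.dist_triangle
            omega
          refine ⟨q.append hadj.toWalk, ?_⟩
          intro t ht
          rw [SimpleGraph.Walk.mem_support_append_iff] at ht
          rcases ht with ht | ht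
          · exact hq t ht
          · have : t ∈ [z, a] := by
              simpa [SimpleGraph.Adj.toWalk, SimpleGraph.Walk.support_cons] using ht
            have h2 : t = z ∨ t = a := by simpa using this
            rcases h2 with h2 | h2
            · rw [h2]; exact hq z q.end_mem_support
            · rw [h2]; exact haS
      · push_neg at hnear
        exfalso
        obtain ⟨b₁, hb₁S, hb₁adj, hb₁R⟩ := hfl s₁ hs₁
        obtain ⟨b₂, hb₂S, hb₂adj, hb₂R⟩ := hfl s₂ hs₂
        have h1 : 4 ≤ T.dist (f b₁) c := hnear _ hb₁R
        have h2 : 4 ≤ T.dist (f b₂) c := hnear _ hb₂R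
        have hd1 : T.dist (f b₁) x ≤ 4 := (hiff b₁ s₁ hb₁adj.ne).1 hb₁adj
        have hd2 : T.dist (f b₂) y ≤ 4 := (hiff b₂ s₂ hb₂adj.ne).1 hb₂adj
        have ht1 : TBtw T (f b₁) x c := star_type hT hxc hcy hxy h1 hd1
        have ht2 : TBtw T (f b₂) y c := by
          have hyc : T.dist y c = 1 := by
            have : T.dist y c = T.dist c y := dist_comm; omega
          have hcx : T.dist c x = 1 := by
            have : T.dist c x = T.dist x c := dist_comm; omega
          have hyx : T.dist y x = 2 := by
            have : T.dist y x = T.dist x y := dist_comm; omega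
          exact star_type hT hyc hcx hyx h2 hd2
        obtain ⟨q₁, hq₁⟩ := hb₁R
        obtain ⟨q₂, hq₂⟩ := hb₂R
        have hQs : ∀ t ∈ (q₁.reverse.append q₂).support, ReachAvoid G S w₀ t := by
          intro t ht
          rw [SimpleGraph.Walk.mem_support_append_iff] at ht
          rcases ht with ht | ht
          · rw [SimpleGraph.Walk.support_reverse, List.mem_reverse] at ht
            exact ⟨q₁.takeUntil t ht, fun z hz => hq₁ z (q₁.support_takeUntil_subset ht hz)⟩
          · exact ⟨q₂.takeUntil t ht, fun z hz => hq₂ z (q₂.support_takeUntil_subset ht hz)⟩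
        have hQfar : ∀ t ∈ (q₁.reverse.append q₂).support, 4 ≤ T.dist (f t) c :=
          fun t ht => hnear _ (hQs t ht)
        have hres := walk_invar hT hiff hxc hcy hxy (q₁.reverse.append q₂) hQfar ht1
        exact star_excl hT hxc hcy hxy hres ht2
    have Ru := hreach u₀ hu0S (fun s hs => (hfull s hs).1)
    have Rv := hreach v₀ hv0S (fun s hs => (hfull s hs).2)
    obtain ⟨qu, hqu⟩ := Ru
    obtain ⟨qv, hqv⟩ := Rv
    obtain ⟨w, hw, hwS⟩ := hsep.2.2 (qu.append qv.reverse)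
    rw [SimpleGraph.Walk.mem_support_append_iff] at hw
    rcases hw with hw | hw
    · exact hqu w hw hwS
    · rw [SimpleGraph.Walk.support_reverse, List.mem_reverse] at hw
      exact hqv w hw hwS
  -- ===== conclusion =====
  refine ⟨c, hcCenter, ?_, ?_⟩
  · rcases hclose with hcm | hcm'
    · exact ⟨m, hmCenter, hcm⟩
    · exact ⟨m', hm'Center, hcm'⟩
  · ext w
    simp only [Set.mem_inter_iff, Set.mem_setOf_eq, Set.mem_range, Set.mem_image]
    constructor
    · rintro ⟨hor, a, rfl⟩
      have h1 : T.dist c (f a) ≤ 1 := by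
        rcases hor with h | h
        · rw [h]; simp [SimpleGraph.dist_self]
        · exact le_of_eq (dist_eq_one_iff_adj.mpr h)
      exact ⟨a, key a h1, rfl⟩
    · rintro ⟨s, hs, rfl⟩
      have h1 : T.dist c (f s) ≤ 1 := heccc (f s) (mem_span_of_mem hT ⟨s, hs, rfl⟩)
      refine ⟨?_, ⟨s, rfl⟩⟩
      rcases Nat.le_one_iff_eq_zero_or_eq_one.mp h1 with h0 | h0
      · exact Or.inl (hT.isConnected.dist_eq_zero_iff.mp h0).symm
      · exact Or.inr (dist_eq_one_iff_adj.mp h0)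
end
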